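/- Let m ≥ 1 and let D be a finite nonempty subset of ℤ^m \ {0} with D = −D. For coefficients c : D → ℂ satisfying c_{−d} = conj(c_d) for all d ∈ D, the function f_c(θ₁, …, θ_m) = Σ_{d ∈ D} c_d e^{i(d₁θ₁ + … + d_mθ_m)} is real-valued. Then the function sending the coefficient vector c to ρ₋(f_c) = (1/(2π)^m)·λ_m{θ ∈ [0,2π)^m : f_c(θ) < 0} is continuous at every nonzero coefficient vector c (within the set of coefficient vectors satisfying c_{−d} = conj(c_d)). -/

import Mathlib

open MeasureTheory ComplexConjugate
open scoped Real

/-- A nonzero exponential sum with integer frequencies has countably many real zeros. -/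
lemma aux_one_dim {ι : Type*} (s : Finset ι) (n : ι → ℤ) (b : ι → ℂ)
    (hinj : Set.InjOn n s) (hne : ∃ i ∈ s, b i ≠ 0) :
    Set.Countable {t : ℝ | ∑ i ∈ s, b i * Complex.exp (Complex.I * (n i * t)) = 0} := by
  classical
  obtain ⟨i₀, hi₀, hb₀⟩ := hne
  set N : ℕ := s.sup fun i => (-(n i)).toNat with hN
  have hNle : ∀ i ∈ s, 0 ≤ n i + N := by
    intro i hi
    have h1 : (-(n i)).toNat ≤ N := Finset.le_sup (f := fun i => (-(n i)).toNat) hi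
    have h2 : -(n i) ≤ ((-(n i)).toNat : ℤ) := Int.self_le_toNat _
    omega
  set p : Polynomial ℂ := ∑ i ∈ s, Polynomial.C (b i) * Polynomial.X ^ (n i + N).toNat with hp
  have hcoeff : p.coeff (n i₀ + N).toNat = b i₀ := by
    rw [hp, Polynomial.finset_sum_coeff]
    rw [Finset.sum_eq_single i₀]
    · simp [Polynomial.coeff_X_pow]
    · intro i hi hne
      have : (n i + N).toNat ≠ (n i₀ + N).toNat := by
        intro h
        apply hne
        apply hinj hi hi₀
        have := hNle i hi
        have := hNle i₀ hi₀
        omega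
      simp only [Polynomial.coeff_C_mul, Polynomial.coeff_X_pow,
        if_neg (fun h => this (Eq.symm h)), mul_zero]
    · intro h; exact absurd hi₀ h
  have hp0 : p ≠ 0 := fun h => hb₀ (by rw [← hcoeff, h, Polynomial.coeff_zero])
  have key : ∀ t : ℝ, (∑ i ∈ s, b i * Complex.exp (Complex.I * (n i * t))) *
      Complex.exp ((N : ℂ) * (Complex.I * t)) = p.eval (Complex.exp (Complex.I * t)) := by
    intro t
    rw [hp, Polynomial.eval_finset_sum, Finset.sum_mul]
    refine Finset.sum_congr rfl fun i hi => ?_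
    rw [Polynomial.eval_mul, Polynomial.eval_C, Polynomial.eval_pow, Polynomial.eval_X]
    have h1 : ((n i + N).toNat : ℤ) = n i + N := Int.toNat_of_nonneg (hNle i hi)
    have h2 : (((n i + N).toNat : ℕ) : ℂ) = (n i : ℂ) + (N : ℂ) := by
      exact_mod_cast h1
    have : Complex.exp (Complex.I * t) ^ (n i + N).toNat
        = Complex.exp (((n i : ℂ) + N) * (Complex.I * t)) := by
      rw [← Complex.exp_nat_mul, h2]
    rw [this, mul_assoc]
    congr 1
    rw [← Complex.exp_add]
    congr 1
    ring
  -- the zero set is contained in a countable union over roots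
  have hsub : {t : ℝ | ∑ i ∈ s, b i * Complex.exp (Complex.I * (n i * t)) = 0} ⊆
      ⋃ z ∈ p.roots.toFinset, {t : ℝ | Complex.exp (Complex.I * t) = z} := by
    intro t ht
    have h0 : p.eval (Complex.exp (Complex.I * t)) = 0 := by
      rw [← key t, Set.mem_setOf_eq.mp ht, zero_mul]
    refine Set.mem_iUnion₂.mpr ⟨Complex.exp (Complex.I * t), ?_, rfl⟩
    rw [Multiset.mem_toFinset, Polynomial.mem_roots hp0]
    exact h0
  refine Set.Countable.mono hsub ?_
  refine Set.Countable.biUnion (p.roots.toFinset.finite_toSet.countable) fun z _ => ?_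
  rcases Set.eq_empty_or_nonempty {t : ℝ | Complex.exp (Complex.I * t) = z} with h | ⟨t₀, ht₀⟩
  · simp [h]
  · have : {t : ℝ | Complex.exp (Complex.I * t) = z} ⊆
        Set.range fun k : ℤ => t₀ + k * (2 * Real.pi) := by
      intro t ht
      have : Complex.exp (Complex.I * t) = Complex.exp (Complex.I * t₀) := by
        rw [Set.mem_setOf_eq.mp ht, ht₀]
      obtain ⟨k, hk⟩ := Complex.exp_eq_exp_iff_exists_int.mp this
      refine ⟨k, ?_⟩
      have him := congrArg Complex.im hk
      simp [Complex.mul_im, Complex.add_im] at him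
      show t₀ + (k : ℝ) * (2 * Real.pi) = t
      linarith [him]
    exact Set.Countable.mono this (Set.countable_range _)

set_option maxHeartbeats 1000000 in
/-- The zero set of a nonzero trigonometric polynomial on `ℝ^m` is Lebesgue-null. -/
lemma aux_null_zeros : ∀ (m : ℕ) (s : Finset (Fin m → ℤ)) (b : (Fin m → ℤ) → ℂ),
    (∃ d ∈ s, b d ≠ 0) →
    volume {θ : Fin m → ℝ |
      ∑ d ∈ s, b d * Complex.exp (Complex.I * ∑ j, (d j : ℂ) * (θ j : ℂ)) = 0} = 0 := by
  intro m
  induction m with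
  | zero =>
    intro s b ⟨d₀, hd₀, hb₀⟩
    have hs : s = {d₀} := Finset.eq_singleton_iff_unique_mem.mpr
      ⟨hd₀, fun x _ => Subsingleton.elim x d₀⟩
    have : {θ : Fin 0 → ℝ |
        ∑ d ∈ s, b d * Complex.exp (Complex.I * ∑ j, (d j : ℂ) * (θ j : ℂ)) = 0} = ∅ := by
      ext θ
      simp [hs, hb₀]
    rw [this]; simp
  | succ m IH =>
    intro s b ⟨d₀, hd₀, hb₀⟩
    classical
    set tl : (Fin (m + 1) → ℤ) → (Fin m → ℤ) := fun d j => d j.succ with htl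
    set e := MeasurableEquiv.piFinSuccAbove (fun _ : Fin (m + 1) => ℝ) 0 with he
    set W : Set (ℝ × (Fin m → ℝ)) := {p : ℝ × (Fin m → ℝ) |
      ∑ d ∈ s, b d * Complex.exp (Complex.I *
        ((d 0 : ℂ) * (p.1 : ℂ) + ∑ j, (tl d j : ℂ) * (p.2 j : ℂ))) = 0} with hW
    have hsplit : ∀ (d : Fin (m + 1) → ℤ) (θ : Fin (m + 1) → ℝ),
        (∑ j, (d j : ℂ) * (θ j : ℂ)) =
          (d 0 : ℂ) * ((e θ).1 : ℂ) + ∑ j : Fin m, (tl d j : ℂ) * ((e θ).2 j : ℂ) := by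
      intro d θ
      rw [Fin.sum_univ_succ]
      have h1 : (e θ).1 = θ 0 := rfl
      have h2 : ∀ j : Fin m, (e θ).2 j = θ j.succ := by
        intro j
        show θ ((0 : Fin (m + 1)).succAbove j) = θ j.succ
        rw [Fin.zero_succAbove]
      rw [h1]
      exact congrArg (HAdd.hAdd _) (Finset.sum_congr rfl fun j _ => by rw [h2 j])
    have hpre : {θ : Fin (m+1) → ℝ |
        ∑ d ∈ s, b d * Complex.exp (Complex.I * ∑ j, (d j : ℂ) * (θ j : ℂ)) = 0}
        = e ⁻¹' W := by
      ext θ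
      have hs2 : ∀ d : Fin (m+1) → ℤ, (Complex.I * ∑ j, (d j : ℂ) * (θ j : ℂ)) =
          Complex.I * ((d 0 : ℂ) * ((e θ).1 : ℂ) +
            ∑ j : Fin m, (tl d j : ℂ) * ((e θ).2 j : ℂ)) := fun d => by rw [hsplit]
      simp only [Set.mem_preimage, hW, Set.mem_setOf_eq, hs2]
    have hFcont : Continuous fun p : ℝ × (Fin m → ℝ) =>
        ∑ d ∈ s, b d * Complex.exp (Complex.I *
          ((d 0 : ℂ) * (p.1 : ℂ) + ∑ j, (tl d j : ℂ) * (p.2 j : ℂ))) := by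
      refine continuous_finset_sum _ fun d _ => continuous_const.mul ?_
      refine Complex.continuous_exp.comp (continuous_const.mul ?_)
      exact ((continuous_const.mul (Complex.continuous_ofReal.comp continuous_fst)).add
        (continuous_finset_sum _ fun j _ => continuous_const.mul
          (Complex.continuous_ofReal.comp ((continuous_apply j).comp continuous_snd))))
    have hWm : MeasurableSet W := hFcont.measurable (measurableSet_singleton 0)
    have hmp : MeasurePreserving e volume volume :=
      volume_preserving_piFinSuccAbove (fun _ : Fin (m + 1) => ℝ) 0
    rw [hpre, hmp.measure_preimage hWm.nullMeasurableSet]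
    rw [MeasureTheory.Measure.volume_eq_prod, Measure.measure_prod_null hWm]
    -- the bad set of t
    have hE : Set.Countable {t : ℝ | ∑ d ∈ s.filter (fun x => tl x = tl d₀),
        b d * Complex.exp (Complex.I * ((d 0 : ℂ) * (t : ℂ))) = 0} := by
      refine aux_one_dim (s.filter (fun x => tl x = tl d₀)) (fun d => d 0) b ?_
        ⟨d₀, Finset.mem_filter.mpr ⟨hd₀, rfl⟩, hb₀⟩
      intro x hx y hy hxy
      simp only [Finset.coe_filter, Set.mem_setOf_eq] at hx hy
      funext j
      refine Fin.cases ?_ ?_ j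
      · exact hxy
      · intro i
        have hx2 := congrFun hx.2 i
        have hy2 := congrFun hy.2 i
        simp only [htl] at hx2 hy2
        rw [hx2, hy2]
    have hEnull : ∀ᵐ t : ℝ, t ∉ {t : ℝ | ∑ d ∈ s.filter (fun x => tl x = tl d₀),
        b d * Complex.exp (Complex.I * ((d 0 : ℂ) * (t : ℂ))) = 0} :=
      measure_eq_zero_iff_ae_notMem.mp (hE.measure_zero volume)
    filter_upwards [hEnull] with t ht
    set b' : (Fin m → ℤ) → ℂ := fun d' => ∑ d ∈ s.filter (fun x => tl x = d'),
      b d * Complex.exp (Complex.I * ((d 0 : ℂ) * (t : ℂ))) with hb'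
    have hfib : ∀ θ' : Fin m → ℝ,
        (∑ d ∈ s, b d * Complex.exp (Complex.I *
          ((d 0 : ℂ) * (t : ℂ) + ∑ j, (tl d j : ℂ) * (θ' j : ℂ)))) =
        ∑ d' ∈ s.image tl, b' d' * Complex.exp (Complex.I * ∑ j, (d' j : ℂ) * (θ' j : ℂ)) := by
      intro θ'
      rw [← Finset.sum_fiberwise_of_maps_to (fun x hx => Finset.mem_image_of_mem tl hx)
        (fun d => b d * Complex.exp (Complex.I *
          ((d 0 : ℂ) * (t : ℂ) + ∑ j, (tl d j : ℂ) * (θ' j : ℂ))))]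
      refine Finset.sum_congr rfl fun d' _ => ?_
      rw [hb', Finset.sum_mul]
      refine Finset.sum_congr rfl fun d hd => ?_
      have htld : tl d = d' := (Finset.mem_filter.mp hd).2
      rw [← htld, mul_assoc, ← Complex.exp_add, ← mul_add]
    have hset : (Prod.mk t ⁻¹' W) = {θ' : Fin m → ℝ |
        ∑ d' ∈ s.image tl, b' d' * Complex.exp (Complex.I * ∑ j, (d' j : ℂ) * (θ' j : ℂ)) = 0} := by
      ext θ'
      simp only [Set.mem_preimage, hW, Set.mem_setOf_eq, hfib θ']
    show volume (Prod.mk t ⁻¹' W) = 0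
    rw [hset]
    exact IH _ b' ⟨tl d₀, Finset.mem_image_of_mem tl hd₀, ht⟩


noncomputable def auxG (m : ℕ) (D : Finset (Fin m → ℤ)) (c : ↥D → ℂ) (θ : Fin m → ℝ) : ℂ :=
  ∑ d : ↥D, c d * Complex.exp (Complex.I * ∑ i, ((d : Fin m → ℤ) i : ℂ) * (θ i : ℂ))

lemma auxG_conj (m : ℕ) (D : Finset (Fin m → ℤ)) (hsym : ∀ d ∈ D, -d ∈ D)
    (c : ↥D → ℂ)
    (hc : ∀ (d : ↥D) (h : -(d : Fin m → ℤ) ∈ D), c ⟨-(d : Fin m → ℤ), h⟩ = conj (c d))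
    (θ : Fin m → ℝ) : conj (auxG m D c θ) = auxG m D c θ := by
  classical
  have hneg : ∀ d : ↥D, -(d : Fin m → ℤ) ∈ D := fun d => hsym _ d.2
  set negE : ↥D → ↥D := fun d => ⟨-(d : Fin m → ℤ), hneg d⟩ with hnegE
  have hinv : Function.Involutive negE := by
    intro d
    apply Subtype.ext
    show -(-(d : Fin m → ℤ)) = (d : Fin m → ℤ)
    exact neg_neg _
  have hS : ∀ d : ↥D, conj (∑ i, ((d : Fin m → ℤ) i : ℂ) * (θ i : ℂ)) =
      ∑ i, ((d : Fin m → ℤ) i : ℂ) * (θ i : ℂ) := by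
    intro d
    rw [map_sum]
    exact Finset.sum_congr rfl fun i _ => by simp
  have hterm : ∀ d : ↥D,
      conj (c d * Complex.exp (Complex.I * ∑ i, ((d : Fin m → ℤ) i : ℂ) * (θ i : ℂ)))
      = c (negE d) * Complex.exp (Complex.I *
          ∑ i, (((negE d : ↥D) : Fin m → ℤ) i : ℂ) * (θ i : ℂ)) := by
    intro d
    rw [map_mul, ← Complex.exp_conj, map_mul, hS, Complex.conj_I]
    have h1 : c (negE d) = conj (c d) := hc d (hneg d)
    have h2 : (∑ i, (((negE d : ↥D) : Fin m → ℤ) i : ℂ) * (θ i : ℂ))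
        = -∑ i, ((d : Fin m → ℤ) i : ℂ) * (θ i : ℂ) := by
      rw [← Finset.sum_neg_distrib]
      refine Finset.sum_congr rfl fun i _ => ?_
      show ((-(d : Fin m → ℤ)) i : ℂ) * (θ i : ℂ) = -(((d : Fin m → ℤ) i : ℂ) * (θ i : ℂ))
      rw [Pi.neg_apply]
      push_cast
      ring
    rw [h1, h2]
    ring_nf
  unfold auxG
  rw [map_sum]
  rw [Finset.sum_congr rfl fun d _ => hterm d]
  exact Function.Bijective.sum_comp (hinv.bijective)
    (fun d : ↥D => c d * Complex.exp (Complex.I *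
      ∑ i, (((d : ↥D) : Fin m → ℤ) i : ℂ) * (θ i : ℂ)))

lemma auxG_null (m : ℕ) (D : Finset (Fin m → ℤ)) (c : ↥D → ℂ) (hc0 : c ≠ 0) :
    volume {θ : Fin m → ℝ | auxG m D c θ = 0} = 0 := by
  classical
  set b : (Fin m → ℤ) → ℂ := fun x => if h : x ∈ D then c ⟨x, h⟩ else 0 with hb
  have hGb : ∀ θ : Fin m → ℝ, auxG m D c θ =
      ∑ x ∈ D, b x * Complex.exp (Complex.I * ∑ j, (x j : ℂ) * (θ j : ℂ)) := by
    intro θ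
    rw [← Finset.sum_attach D (fun x => b x * Complex.exp (Complex.I * ∑ j, (x j : ℂ) * (θ j : ℂ)))]
    unfold auxG
    rw [← Finset.univ_eq_attach]
    refine Finset.sum_congr rfl fun d _ => ?_
    congr 1
    rw [hb]
    simp only [Subtype.coe_eta, dif_pos d.2]
  obtain ⟨d₀, hd₀⟩ := Function.ne_iff.mp hc0
  have hbne : b (d₀ : Fin m → ℤ) ≠ 0 := by
    rw [hb]
    simpa only [Subtype.coe_eta, dif_pos d₀.2, Pi.zero_apply] using hd₀
  have := aux_null_zeros m D b ⟨(d₀ : Fin m → ℤ), d₀.2, hbne⟩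
  have hseteq : {θ : Fin m → ℝ | auxG m D c θ = 0} =
      {θ : Fin m → ℝ | ∑ x ∈ D, b x * Complex.exp (Complex.I * ∑ j, (x j : ℂ) * (θ j : ℂ)) = 0} := by
    ext θ
    simp only [Set.mem_setOf_eq, hGb θ]
  rw [hseteq]
  exact this

lemma auxG_lip (m : ℕ) (D : Finset (Fin m → ℤ)) (c c' : ↥D → ℂ) (θ : Fin m → ℝ) :
    |(auxG m D c' θ).re - (auxG m D c θ).re| ≤ (Fintype.card ↥D : ℝ) * dist c' c := by
  classical
  set S : ↥D → ℂ := fun d => ∑ i, ((d : Fin m → ℤ) i : ℂ) * (θ i : ℂ) with hSdef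
  have hdiff : auxG m D c' θ - auxG m D c θ =
      ∑ d : ↥D, (c' d - c d) * Complex.exp (Complex.I * S d) := by
    unfold auxG
    rw [← Finset.sum_sub_distrib]
    exact Finset.sum_congr rfl fun d _ => by ring
  have habs1 : |(auxG m D c' θ).re - (auxG m D c θ).re| ≤
      ‖auxG m D c' θ - auxG m D c θ‖ := by
    rw [← Complex.sub_re]
    exact Complex.abs_re_le_norm _
  have hexp1 : ∀ d : ↥D, ‖Complex.exp (Complex.I * S d)‖ = 1 := by
    intro d
    have hS : S d = ((∑ i, ((d : Fin m → ℤ) i : ℝ) * θ i : ℝ) : ℂ) := by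
      rw [hSdef]
      push_cast
      rfl
    rw [hS, mul_comm, Complex.norm_exp_ofReal_mul_I]
  calc |(auxG m D c' θ).re - (auxG m D c θ).re|
      ≤ ‖auxG m D c' θ - auxG m D c θ‖ := habs1
    _ = ‖∑ d : ↥D, (c' d - c d) * Complex.exp (Complex.I * S d)‖ := by rw [hdiff]
    _ ≤ ∑ d : ↥D, ‖(c' d - c d) * Complex.exp (Complex.I * S d)‖ :=
        norm_sum_le _ _
    _ = ∑ d : ↥D, ‖c' d - c d‖ := by
        refine Finset.sum_congr rfl fun d _ => ?_
        rw [norm_mul, hexp1 d, mul_one]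
    _ ≤ ∑ _d : ↥D, dist c' c := by
        refine Finset.sum_le_sum fun d _ => ?_
        have : ‖c' d - c d‖ = ‖(c' - c) d‖ := by
          simp
        rw [this, dist_eq_norm]
        exact norm_le_pi_norm (c' - c) d
    _ = (Fintype.card ↥D : ℝ) * dist c' c := by
        rw [Finset.sum_const, Finset.card_univ, nsmul_eq_mul]

/-- For a finite symmetric `D ⊆ ℤ^m \ {0}` and coefficient vectors `c : D → ℂ` with
`c₋d = conj(c_d)` (so that `f_c(θ) = Σ_{d ∈ D} c_d e^{i⟨d,θ⟩}` is real-valued), the map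
`c ↦ ρ₋(f_c) = λ_m{θ ∈ [0,2π)^m : f_c(θ) < 0}/(2π)^m` is continuous, within the set of
such symmetric coefficient vectors, at every nonzero `c`. -/
theorem stmt_13 (m : ℕ) (hm : 1 ≤ m) (D : Finset (Fin m → ℤ)) (hne : D.Nonempty)
    (h0 : (fun _ => 0 : Fin m → ℤ) ∉ D) (hsym : ∀ d ∈ D, -d ∈ D) :
    ∀ c ∈ {c : ↥D → ℂ | ∀ (d : ↥D) (h : -(d : Fin m → ℤ) ∈ D),
        c ⟨-(d : Fin m → ℤ), h⟩ = conj (c d)}, c ≠ 0 →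
      ContinuousWithinAt
        (fun c : ↥D → ℂ =>
          (volume {θ : Fin m → ℝ | (∀ i, θ i ∈ Set.Ico 0 (2*π)) ∧
            (∑ d : ↥D, c d * Complex.exp (Complex.I *
              ∑ i, ((d : Fin m → ℤ) i : ℂ) * (θ i : ℂ))).re < 0}).toReal / (2*π) ^ m)
        {c : ↥D → ℂ | ∀ (d : ↥D) (h : -(d : Fin m → ℤ) ∈ D),
          c ⟨-(d : Fin m → ℤ), h⟩ = conj (c d)} c := by
  intro c hc hc0
  classical
  -- the level sets
  set A : (↥D → ℂ) → Set (Fin m → ℝ) := fun c' =>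
    {θ : Fin m → ℝ | (∀ i, θ i ∈ Set.Ico 0 (2*π)) ∧ (auxG m D c' θ).re < 0} with hA
  -- the box
  set Box : Set (Fin m → ℝ) := {θ : Fin m → ℝ | ∀ i, θ i ∈ Set.Ico 0 (2*π)} with hBoxdef
  have hBoxeq : Box = Set.pi Set.univ (fun _ : Fin m => Set.Ico 0 (2*π)) := by
    ext θ
    simp [hBoxdef, Set.mem_pi]
  have hBoxm : MeasurableSet Box := by
    rw [hBoxeq]
    exact MeasurableSet.univ_pi fun i => measurableSet_Ico
  have hBoxfin : volume Box ≠ ⊤ := by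
    rw [hBoxeq, volume_pi_pi]
    simp only [Real.volume_Ico, sub_zero, Finset.prod_const, Finset.card_univ, Fintype.card_fin]
    exact (ENNReal.pow_lt_top ENNReal.ofReal_lt_top).ne
  -- continuity of θ ↦ Re (auxG c' θ)
  have hcont : ∀ c' : ↥D → ℂ, Continuous fun θ : Fin m → ℝ => (auxG m D c' θ).re := by
    intro c'
    refine Complex.continuous_re.comp ?_
    refine continuous_finset_sum _ fun d _ => continuous_const.mul ?_
    refine Complex.continuous_exp.comp (continuous_const.mul ?_)
    exact continuous_finset_sum _ fun i _ => continuous_const.mul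
      (Complex.continuous_ofReal.comp (continuous_apply i))
  have hAm : ∀ c' : ↥D → ℂ, MeasurableSet (A c') := by
    intro c'
    exact hBoxm.inter ((isOpen_lt (hcont c') continuous_const).measurableSet)
  have hAsubBox : ∀ c' : ↥D → ℂ, A c' ⊆ Box := fun c' θ h => h.1
  have hAfin : ∀ c' : ↥D → ℂ, volume (A c') ≠ ⊤ :=
    fun c' => (lt_of_le_of_lt (measure_mono (hAsubBox c')) hBoxfin.lt_top).ne
  -- the zero set is null
  have hrezero : ∀ θ : Fin m → ℝ, (auxG m D c θ).re = 0 ↔ auxG m D c θ = 0 := by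
    intro θ
    have him : (auxG m D c θ).im = 0 :=
      Complex.conj_eq_iff_im.mp (auxG_conj m D hsym c hc θ)
    constructor
    · intro h
      exact Complex.ext h him
    · intro h
      rw [h, Complex.zero_re]
  have hnull : volume {θ : Fin m → ℝ | (auxG m D c θ).re = 0} = 0 := by
    have : {θ : Fin m → ℝ | (auxG m D c θ).re = 0} = {θ : Fin m → ℝ | auxG m D c θ = 0} := by
      ext θ
      simp only [Set.mem_setOf_eq, hrezero θ]
    rw [this]
    exact auxG_null m D c hc0
  -- monotone families
  set s : ℕ → Set (Fin m → ℝ) := fun n =>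
    {θ : Fin m → ℝ | θ ∈ Box ∧ (auxG m D c θ).re < 1/(n+1)} with hsdef
  set u : ℕ → Set (Fin m → ℝ) := fun n =>
    {θ : Fin m → ℝ | θ ∈ Box ∧ (auxG m D c θ).re < -(1/(n+1))} with hudef
  have hs_meas : ∀ n, MeasurableSet (s n) := fun n =>
    hBoxm.inter ((isOpen_lt (hcont c) continuous_const).measurableSet)
  have hs_anti : Antitone s := by
    intro n k hnk θ hθ
    refine ⟨hθ.1, lt_of_lt_of_le hθ.2 ?_⟩
    apply one_div_le_one_div_of_le
    · positivity
    · exact_mod_cast Nat.add_le_add_right hnk 1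
  have hu_mono : Monotone u := by
    intro n k hnk θ hθ
    refine ⟨hθ.1, lt_of_lt_of_le hθ.2 ?_⟩
    rw [neg_le_neg_iff]
    apply one_div_le_one_div_of_le
    · positivity
    · exact_mod_cast Nat.add_le_add_right hnk 1
  have hs_inter : (⋂ n, s n) = {θ : Fin m → ℝ | θ ∈ Box ∧ (auxG m D c θ).re ≤ 0} := by
    ext θ
    simp only [Set.mem_iInter, hsdef, Set.mem_setOf_eq]
    constructor
    · intro h
      refine ⟨(h 0).1, ?_⟩
      by_contra hpos
      push_neg at hpos
      obtain ⟨n, hn⟩ := exists_nat_one_div_lt hpos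
      exact absurd (h n) (by push_neg; intro _; linarith [hn])
    · intro h n
      refine ⟨h.1, lt_of_le_of_lt h.2 (by positivity)⟩
  have hu_union : (⋃ n, u n) = A c := by
    ext θ
    simp only [Set.mem_iUnion, hudef, hA, Set.mem_setOf_eq]
    constructor
    · rintro ⟨n, hbox, hlt⟩
      exact ⟨hbox, lt_trans hlt (neg_lt_zero.mpr (by positivity))⟩
    · rintro ⟨hbox, hlt⟩
      obtain ⟨n, hn⟩ := exists_nat_one_div_lt (neg_pos.mpr hlt)
      exact ⟨n, hbox, by linarith [hn]⟩
  have hle_eq : volume {θ : Fin m → ℝ | θ ∈ Box ∧ (auxG m D c θ).re ≤ 0} = volume (A c) := by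
    refine le_antisymm ?_ (measure_mono fun θ h => ⟨h.1, le_of_lt h.2⟩)
    have hsub : {θ : Fin m → ℝ | θ ∈ Box ∧ (auxG m D c θ).re ≤ 0} ⊆
        A c ∪ {θ : Fin m → ℝ | (auxG m D c θ).re = 0} := by
      intro θ h
      rcases lt_or_eq_of_le h.2 with h2 | h2
      · exact Or.inl ⟨h.1, h2⟩
      · exact Or.inr h2
    calc volume {θ : Fin m → ℝ | θ ∈ Box ∧ (auxG m D c θ).re ≤ 0}
        ≤ volume (A c ∪ {θ : Fin m → ℝ | (auxG m D c θ).re = 0}) := measure_mono hsub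
      _ ≤ volume (A c) + volume {θ : Fin m → ℝ | (auxG m D c θ).re = 0} := measure_union_le _ _
      _ = volume (A c) := by rw [hnull, add_zero]
  have hs_tendsto : Filter.Tendsto (fun n => (volume (s n)).toReal) Filter.atTop
      (nhds (volume (A c)).toReal) := by
    have h1 : Filter.Tendsto (fun n => volume (s n)) Filter.atTop (nhds (volume (A c))) := by
      have := tendsto_measure_iInter_atTop (μ := volume)
        (fun n => (hs_meas n).nullMeasurableSet) hs_anti
        ⟨0, (lt_of_le_of_lt (measure_mono fun θ h => h.1) hBoxfin.lt_top).ne⟩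
      rwa [hs_inter, hle_eq] at this
    exact (ENNReal.tendsto_toReal (hAfin c)).comp h1
  have hu_tendsto : Filter.Tendsto (fun n => (volume (u n)).toReal) Filter.atTop
      (nhds (volume (A c)).toReal) := by
    have h1 : Filter.Tendsto (fun n => volume (u n)) Filter.atTop (nhds (volume (A c))) := by
      have := tendsto_measure_iUnion_atTop (μ := volume) hu_mono
      rwa [hu_union] at this
    exact (ENNReal.tendsto_toReal (hAfin c)).comp h1
  -- main continuity
  have hK : (0 : ℝ) ≤ (Fintype.card ↥D : ℝ) := Nat.cast_nonneg _
  have hmain : ContinuousAt (fun c' : ↥D → ℂ => (volume (A c')).toReal) c := by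
    rw [Metric.continuousAt_iff]
    intro δ hδ
    obtain ⟨N₁, hN₁⟩ := (Filter.tendsto_atTop'.mp hs_tendsto) (Metric.ball (volume (A c)).toReal δ)
      (Metric.ball_mem_nhds _ hδ)
    obtain ⟨N₂, hN₂⟩ := (Filter.tendsto_atTop'.mp hu_tendsto) (Metric.ball (volume (A c)).toReal δ)
      (Metric.ball_mem_nhds _ hδ)
    set n₀ : ℕ := max N₁ N₂ with hn₀
    set ε : ℝ := 1/(n₀+1) with hε
    have hεpos : 0 < ε := by positivity
    have hds : |(volume (s n₀)).toReal - (volume (A c)).toReal| < δ := by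
      have := hN₁ n₀ (le_max_left _ _)
      rwa [Metric.mem_ball, Real.dist_eq] at this
    have hdu : |(volume (u n₀)).toReal - (volume (A c)).toReal| < δ := by
      have := hN₂ n₀ (le_max_right _ _)
      rwa [Metric.mem_ball, Real.dist_eq] at this
    refine ⟨ε / ((Fintype.card ↥D : ℝ) + 1), by positivity, ?_⟩
    intro c' hc'
    have hub : ∀ θ : Fin m → ℝ, |(auxG m D c' θ).re - (auxG m D c θ).re| < ε := by
      intro θ
      refine lt_of_le_of_lt (auxG_lip m D c c' θ) ?_
      calc (Fintype.card ↥D : ℝ) * dist c' c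
          ≤ ((Fintype.card ↥D : ℝ) + 1) * dist c' c := by
            apply mul_le_mul_of_nonneg_right (by linarith) dist_nonneg
        _ < ((Fintype.card ↥D : ℝ) + 1) * (ε / ((Fintype.card ↥D : ℝ) + 1)) := by
            apply mul_lt_mul_of_pos_left hc' (by positivity)
        _ = ε := by field_simp
    have hsub1 : u n₀ ⊆ A c' := by
      intro θ hθ
      refine ⟨hθ.1, ?_⟩
      have h1 := abs_lt.mp (hub θ)
      have h2 := hθ.2
      show (auxG m D c' θ).re < 0
      have : (auxG m D c θ).re < -ε := h2
      linarith [h1.2]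
    have hsub2 : A c' ⊆ s n₀ := by
      intro θ hθ
      refine ⟨hθ.1, ?_⟩
      have h1 := abs_lt.mp (hub θ)
      have h2 : (auxG m D c' θ).re < 0 := hθ.2
      show (auxG m D c θ).re < ε
      linarith [h1.1]
    have hb1 : (volume (u n₀)).toReal ≤ (volume (A c')).toReal :=
      ENNReal.toReal_mono (hAfin c') (measure_mono hsub1)
    have hb2 : (volume (A c')).toReal ≤ (volume (s n₀)).toReal :=
      ENNReal.toReal_mono
        ((lt_of_le_of_lt (measure_mono fun θ h => h.1) hBoxfin.lt_top).ne)
        (measure_mono hsub2)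
    rw [Real.dist_eq, abs_sub_lt_iff]
    constructor
    · have := abs_sub_lt_iff.mp hds
      linarith [this.1, this.2]
    · have := abs_sub_lt_iff.mp hdu
      linarith [this.1, this.2]
  exact ((hmain.div_const _)).continuousWithinAt
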